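/- Let K be a field, V a K-vector space and f a K-linear endomorphism of V. Assume: (i) every v ∈ V lies in some finite-dimensional f-invariant subspace of V; (ii) for every finite-dimensional f-invariant subspace W of V, the characteristic polynomial of the restriction f|_W splits into linear factors over K. Then there exists a unique pair (D, N) of K-linear endomorphisms of V with f = D + N such that every finite-dimensional f-invariant subspace W of V is stable under both D and N, the restriction D|_W is diagonalizable, and the restriction N|_W is nilpotent. Moreover D and N commute with each other. -/

import Mathlib

open Polynomial Module DirectSum

section JCHelpers

variable {K V : Type*} [Field K] [AddCommGroup V] [Module K V]

private lemma jc_ker_aeval_le_iSup_maxGenEigenspace (g : Module.End K V) :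
    ∀ (n : ℕ) (p : K[X]), p.natDegree ≤ n → p ≠ 0 → p.Splits →
      LinearMap.ker (aeval g p) ≤ ⨆ μ, Module.End.maxGenEigenspace g μ := by
  intro n
  induction n with
  | zero =>
    intro p hdeg hp0 _
    have hp : p = C (p.coeff 0) := p.eq_C_of_natDegree_eq_zero (Nat.le_zero.mp hdeg)
    have ha : p.coeff 0 ≠ 0 := fun h => hp0 (by rw [hp, h, map_zero])
    intro x hx
    rw [LinearMap.mem_ker, hp, aeval_C, Module.algebraMap_end_eq_smul_id,
      LinearMap.smul_apply, LinearMap.id_apply, smul_eq_zero] at hx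
    rcases hx with h | h
    · exact absurd h ha
    · rw [h]; exact Submodule.zero_mem _
  | succ n ih =>
    intro p hdeg hp0 hs
    by_cases hd : p.natDegree = 0
    · exact ih p (by omega) hp0 hs
    obtain ⟨μ, hμ⟩ := hs.exists_eval_eq_zero (fun h =>
      hd (natDegree_eq_zero_iff_degree_le_zero.mpr (le_of_eq h)))
    set k := p.rootMultiplicity μ with hk
    set q := p /ₘ ((X - C μ) ^ k) with hqdef
    have hfac : (X - C μ) ^ k * q = p := p.pow_mul_divByMonic_rootMultiplicity_eq μ
    have hq0 : q ≠ 0 := fun h => hp0 (by rw [← hfac, h, mul_zero])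
    have hqroot : eval μ q ≠ 0 := eval_divByMonic_pow_rootMultiplicity_ne_zero μ hp0
    have hkpos : 0 < k := (rootMultiplicity_pos hp0).mpr hμ
    have hcop : IsCoprime ((X - C μ) ^ k) q :=
      ((irreducible_X_sub_C μ).coprime_iff_not_dvd.mpr
        (fun h => hqroot ((dvd_iff_isRoot).mp h))).pow_left
    have hqs : q.Splits :=
      hs.of_dvd hp0 ⟨(X - C μ) ^ k, by rw [← hfac]; ring⟩
    have hdegq : k + q.natDegree = p.natDegree := by
      rw [← hfac, natDegree_mul (pow_ne_zero _ (X_sub_C_ne_zero μ)) hq0,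
        natDegree_pow, natDegree_X_sub_C, mul_one]
    have hqle : q.natDegree ≤ n := by omega
    have hker : LinearMap.ker (aeval g p) =
        LinearMap.ker (aeval g ((X - C μ) ^ k)) ⊔ LinearMap.ker (aeval g q) := by
      rw [sup_ker_aeval_eq_ker_aeval_mul_of_coprime g hcop, hfac]
    rw [hker]
    apply sup_le
    · have : aeval g ((X - C μ) ^ k) = (g - μ • 1) ^ k := by
        rw [map_pow, map_sub, aeval_X, aeval_C, Module.algebraMap_end_eq_smul_id]
        rfl
      rw [this]
      refine le_trans ?_ (le_iSup _ μ)
      rw [← Module.End.genEigenspace_nat]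
      exact Module.End.genEigenspace_le_maximal g μ k
    · exact ih q hqle hq0 hqs

private lemma jc_iSup_maxGenEigenspace_eq_top [FiniteDimensional K V]
    (g : Module.End K V) (h : (LinearMap.charpoly g).Splits) :
    ⨆ μ, Module.End.maxGenEigenspace g μ = ⊤ := by
  rw [eq_top_iff]
  refine le_trans ?_ (jc_ker_aeval_le_iSup_maxGenEigenspace g (LinearMap.charpoly g).natDegree
    _ le_rfl (LinearMap.charpoly_monic g).ne_zero h)
  rw [LinearMap.aeval_self_charpoly]
  simp

private lemma jc_pow_res_coe (g : V →ₗ[K] V) (Z : Submodule K V) (hZ : ∀ x ∈ Z, g x ∈ Z)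
    (m : ℕ) : ∀ y : Z, (((g.restrict hZ) ^ m) y : V) = (g ^ m) (y : V) := by
  induction m with
  | zero => intro y; simp
  | succ m ih =>
    intro y
    rw [pow_succ, pow_succ, Module.End.mul_apply, Module.End.mul_apply, ih,
      LinearMap.restrict_apply]

private lemma jc_nilres (f : V →ₗ[K] V) (μ : K) (Z : Submodule K V) (hZf : ∀ x ∈ Z, f x ∈ Z)
    [FiniteDimensional K Z] (hle : Z ≤ Module.End.maxGenEigenspace f μ) :
    ∀ x ∈ Z, ((f - μ • 1) ^ (Module.finrank K Z)) x = 0 := by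
  intro x hx
  have h1 : Module.End.maxGenEigenspace (f.restrict hZf) μ = ⊤ := by
    rw [eq_top_iff]
    intro y _
    rw [Module.End.maxGenEigenspace, Module.End.genEigenspace_restrict]
    exact hle y.2
  have h2 : Module.End.genEigenspace (f.restrict hZf) μ (Module.finrank K Z) = ⊤ := by
    rw [← Module.End.maxGenEigenspace_eq_genEigenspace_finrank]; exact h1
  have h3 : ((f.restrict hZf - μ • 1) ^ (Module.finrank K Z)) ⟨x, hx⟩ = 0 := by
    have hm : (⟨x, hx⟩ : Z) ∈ Module.End.genEigenspace (f.restrict hZf) μ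
        (Module.finrank K Z) := h2 ▸ Submodule.mem_top
    rwa [Module.End.genEigenspace_nat, LinearMap.mem_ker] at hm
  have h4 : f.restrict hZf - μ • 1 = (f - μ • 1).restrict
      (fun y hy => by
        simpa using sub_mem (hZf y hy) (Z.smul_mem μ hy)) := by
    ext y
    simp [LinearMap.restrict_apply]
  rw [h4] at h3
  have := congrArg (Subtype.val) h3
  rwa [jc_pow_res_coe] at this

end JCHelpers


/-- The pair `(D, N)` is a locally finite Jordan–Chevalley decomposition of `f`:
`f = D + N`, and every finite-dimensional `f`-invariant subspace `W` is stable under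
`D` and `N`, with `D|_W` diagonalizable (its eigenspaces span `W`) and `N|_W`
nilpotent. -/
def IsLocallyFiniteJordanDecomposition {K V : Type*} [Field K] [AddCommGroup V]
    [Module K V] (f D N : V →ₗ[K] V) : Prop :=
  f = D + N ∧
    ∀ W : Submodule K V, (∀ x ∈ W, f x ∈ W) → FiniteDimensional K W →
      ∃ (hD : ∀ x ∈ W, D x ∈ W) (hN : ∀ x ∈ W, N x ∈ W),
        (⨆ μ : K, Module.End.eigenspace (D.restrict hD) μ) = ⊤ ∧
        IsNilpotent (N.restrict hN)

/-- Let `K` be a field, `V` a `K`-vector space and `f` an endomorphism of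
`V` such that (i) every vector lies in a finite-dimensional `f`-invariant subspace, and
(ii) the characteristic polynomial of the restriction of `f` to every finite-dimensional
`f`-invariant subspace splits over `K`.  Then there is a unique pair `(D, N)` of
endomorphisms with `f = D + N` such that every finite-dimensional `f`-invariant subspace
is stable under `D` and `N`, with `D` restricting to a diagonalizable map and `N` to a
nilpotent one; moreover `D` and `N` commute. -/
theorem stmt6 {K V : Type*} [Field K] [AddCommGroup V] [Module K V] (f : V →ₗ[K] V)
    (hloc : ∀ v : V, ∃ W : Submodule K V,
      FiniteDimensional K W ∧ (∀ x ∈ W, f x ∈ W) ∧ v ∈ W)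
    (hsplit : ∀ (W : Submodule K V) (hW : ∀ x ∈ W, f x ∈ W) [FiniteDimensional K W],
      (LinearMap.charpoly (f.restrict hW)).Splits) :
    ∃ D N : V →ₗ[K] V,
      IsLocallyFiniteJordanDecomposition f D N ∧
      Commute D N ∧
      ∀ D' N' : V →ₗ[K] V, IsLocallyFiniteJordanDecomposition f D' N' →
        D' = D ∧ N' = N := by
  classical
  set G : K → Submodule K V := fun μ => Module.End.maxGenEigenspace f μ with hGdef
  have hGf : ∀ μ, ∀ x ∈ G μ, f x ∈ G μ := fun μ x hx =>
    Module.End.mapsTo_maxGenEigenspace_of_comm (Commute.refl f) μ hx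
  have hWle : ∀ (W : Submodule K V), (∀ x ∈ W, f x ∈ W) → ∀ (_ : FiniteDimensional K W),
      W ≤ ⨆ μ, G μ ⊓ W := by
    intro W hW _
    calc W = Submodule.map W.subtype ⊤ := (Submodule.map_subtype_top W).symm
      _ = Submodule.map W.subtype (⨆ μ, Module.End.maxGenEigenspace (f.restrict hW) μ) := by
          rw [jc_iSup_maxGenEigenspace_eq_top _ (hsplit W hW)]
      _ = ⨆ μ, Submodule.map W.subtype (Module.End.maxGenEigenspace (f.restrict hW) μ) :=
          Submodule.map_iSup _ _
      _ ≤ ⨆ μ, G μ ⊓ W := by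
          refine iSup_mono fun μ => ?_
          rw [← Submodule.inf_genEigenspace f W hW, inf_comm]
  have hTop : ⨆ μ, G μ = ⊤ := by
    rw [eq_top_iff]
    intro v _
    obtain ⟨W, hWfd, hWf, hvW⟩ := hloc v
    exact (le_trans (hWle W hWf hWfd) (iSup_mono fun μ => inf_le_left)) hvW
  have hInt : DirectSum.IsInternal G :=
    (DirectSum.isInternal_submodule_iff_iSupIndep_and_iSup_eq_top G).mpr
      ⟨Module.End.independent_maxGenEigenspace f, hTop⟩
  set e : (⨁ μ, ↥(G μ)) ≃ₗ[K] V := LinearEquiv.ofBijective (DirectSum.coeLinearMap G) hInt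
    with hedef
  set D : V →ₗ[K] V :=
    (DirectSum.toModule K K V fun μ => μ • (G μ).subtype).comp (e.symm : V →ₗ[K] ⨁ μ, ↥(G μ))
    with hDdef
  have hDapply : ∀ μ, ∀ x ∈ G μ, D x = μ • x := by
    intro μ x hx
    have h1 : e (DirectSum.lof K K (fun μ => ↥(G μ)) μ ⟨x, hx⟩) = x := by
      rw [DirectSum.lof_eq_of]
      exact DirectSum.coeLinearMap_of G μ ⟨x, hx⟩
    have h2 : e.symm x = DirectSum.lof K K (fun μ => ↥(G μ)) μ ⟨x, hx⟩ := by
      rw [LinearEquiv.symm_apply_eq]; exact h1.symm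
    rw [hDdef, LinearMap.comp_apply, LinearEquiv.coe_coe, h2, DirectSum.toModule_lof]
    rfl
  set N : V →ₗ[K] V := f - D with hNdef
  have hNapply : ∀ μ, ∀ x ∈ G μ, N x = f x - μ • x := by
    intro μ x hx
    rw [hNdef, LinearMap.sub_apply, hDapply μ x hx]
  have hNmem : ∀ μ, ∀ x ∈ G μ, N x ∈ G μ := by
    intro μ x hx
    rw [hNapply μ x hx]
    exact sub_mem (hGf μ x hx) ((G μ).smul_mem μ hx)
  have hfDN : f = D + N := by
    rw [hNdef]; abel
  have hExt : ∀ (g₁ g₂ : V →ₗ[K] V), (∀ μ, ∀ x ∈ G μ, g₁ x = g₂ x) → g₁ = g₂ := by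
    intro g₁ g₂ h
    ext x
    have hx : x ∈ ⨆ μ, G μ := hTop ▸ Submodule.mem_top
    refine Submodule.iSup_induction G (motive := fun y => g₁ y = g₂ y) hx h (by simp)
      (fun a b ha hb => ?_)
    show g₁ (a + b) = g₂ (a + b)
    rw [map_add, map_add, ha, hb]
  -- the local decomposition property
  have hprop : ∀ W : Submodule K V, (∀ x ∈ W, f x ∈ W) → ∀ (_ : FiniteDimensional K W),
      ∃ (hD : ∀ x ∈ W, D x ∈ W) (hN : ∀ x ∈ W, N x ∈ W),
        (⨆ μ : K, Module.End.eigenspace (D.restrict hD) μ) = ⊤ ∧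
        IsNilpotent (N.restrict hN) := by
    intro W hWf hWfd
    have hle := hWle W hWf hWfd
    have hD : ∀ x ∈ W, D x ∈ W := by
      intro x hx
      exact Submodule.iSup_induction (fun μ => G μ ⊓ W) (motive := fun y => D y ∈ W) (hle hx)
        (fun μ y hy => show D y ∈ W by
          rw [hDapply μ y (Submodule.mem_inf.mp hy).1]
          exact W.smul_mem μ (Submodule.mem_inf.mp hy).2)
        (by simp)
        (fun a b ha hb => show D (a + b) ∈ W by rw [map_add]; exact add_mem ha hb)
    have hN : ∀ x ∈ W, N x ∈ W := by
      intro x hx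
      exact Submodule.iSup_induction (fun μ => G μ ⊓ W) (motive := fun y => N y ∈ W) (hle hx)
        (fun μ y hy => show N y ∈ W by
          rw [hNapply μ y (Submodule.mem_inf.mp hy).1]
          exact sub_mem (hWf y (Submodule.mem_inf.mp hy).2)
            (W.smul_mem μ (Submodule.mem_inf.mp hy).2))
        (by simp)
        (fun a b ha hb => show N (a + b) ∈ W by rw [map_add]; exact add_mem ha hb)
    refine ⟨hD, hN, ?_, ?_⟩
    · -- diagonalizability
      apply Submodule.map_injective_of_injective W.injective_subtype
      rw [Submodule.map_top, Submodule.range_subtype]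
      have h1 : ∀ μ, G μ ⊓ W ≤
          Submodule.map W.subtype (Module.End.eigenspace (D.restrict hD) μ) := by
        intro μ x hx
        refine ⟨⟨x, (Submodule.mem_inf.mp hx).2⟩, ?_, rfl⟩
        rw [SetLike.mem_coe, Module.End.mem_eigenspace_iff]
        apply Subtype.ext
        rw [LinearMap.restrict_apply]
        exact hDapply μ x (Submodule.mem_inf.mp hx).1
      apply le_antisymm
      · rw [Submodule.map_iSup]
        exact iSup_le fun μ => Submodule.map_subtype_le W _
      · refine le_trans hle ?_
        rw [Submodule.map_iSup]
        exact iSup_mono h1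
    · -- nilpotency
      refine ⟨Module.finrank K W, ?_⟩
      have key : ∀ x ∈ W, (N ^ Module.finrank K W) x = 0 := by
        intro x hx
        refine Submodule.iSup_induction (fun μ => G μ ⊓ W)
          (motive := fun y => (N ^ Module.finrank K W) y = 0) (hle hx) ?_ (by simp)
          (fun a b ha hb => show (N ^ Module.finrank K W) (a + b) = 0 by
            rw [map_add, ha, hb, add_zero])
        intro μ y hy
        haveI : FiniteDimensional K ↥(G μ ⊓ W) :=
          Submodule.finiteDimensional_of_le inf_le_right
        have hZf : ∀ z ∈ G μ ⊓ W, f z ∈ G μ ⊓ W := fun z hz =>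
          Submodule.mem_inf.mpr ⟨hGf μ z (Submodule.mem_inf.mp hz).1,
            hWf z (Submodule.mem_inf.mp hz).2⟩
        have hnr := jc_nilres f μ (G μ ⊓ W) hZf inf_le_left
        have hdle : Module.finrank K ↥(G μ ⊓ W) ≤ Module.finrank K W :=
          Submodule.finrank_mono inf_le_right
        have hstep : ∀ m : ℕ, ((f - μ • 1) ^ m) y ∈ G μ ⊓ W ∧
            (N ^ m) y = ((f - μ • 1) ^ m) y := by
          intro m
          induction m with
          | zero => exact ⟨hy, rfl⟩
          | succ m ih =>
            have hmem : (f - μ • 1) (((f - μ • 1) ^ m) y) ∈ G μ ⊓ W := by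
              have h := ih.1
              have : (f - μ • 1) (((f - μ • 1) ^ m) y)
                  = f (((f - μ • 1) ^ m) y) - μ • (((f - μ • 1) ^ m) y) := by
                simp [LinearMap.sub_apply]
              rw [this]
              exact sub_mem (hZf _ h) (Submodule.smul_mem _ μ h)
            constructor
            · rw [pow_succ', Module.End.mul_apply]
              exact hmem
            · rw [pow_succ', pow_succ', Module.End.mul_apply, Module.End.mul_apply, ← ih.2]
              have h := ih.1
              rw [ih.2, hNapply μ _ (Submodule.mem_inf.mp h).1]
              simp [LinearMap.sub_apply]
        have hzero : ((f - μ • 1) ^ (Module.finrank K W)) y = 0 := by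
          obtain ⟨d, hd⟩ : ∃ d, Module.finrank K W = d + Module.finrank K ↥(G μ ⊓ W) :=
            ⟨_, (Nat.sub_add_cancel hdle).symm⟩
          rw [hd, pow_add, Module.End.mul_apply, hnr y hy, map_zero]
        rw [(hstep _).2, hzero]
      ext z
      rw [Module.End.pow_restrict]
      simp only [LinearMap.restrict_coe_apply, LinearMap.zero_apply, Submodule.coe_zero]
      exact key z z.2
  have hComm : Commute D N := by
    refine hExt (D * N) (N * D) fun μ x hx => ?_
    rw [Module.End.mul_apply, Module.End.mul_apply, hDapply μ _ (hNmem μ x hx),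
      hDapply μ x hx, map_smul]
  refine ⟨D, N, ⟨hfDN, hprop⟩, hComm, ?_⟩
  rintro D' N' ⟨hsum', hprop'⟩
  -- key uniqueness claim
  have claim : ∀ (n : ℕ) (μ : K) (Z : Submodule K V) (hZf : ∀ x ∈ Z, f x ∈ Z)
      (_ : FiniteDimensional K Z), Z ≤ G μ → Module.finrank K Z ≤ n →
      ∀ x ∈ Z, D' x = μ • x := by
    intro n
    induction n with
    | zero =>
      intro μ Z hZf hfd hZG hrk x hx
      haveI := hfd
      have : Z = ⊥ := Submodule.finrank_eq_zero.mp (Nat.le_zero.mp hrk)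
      rw [this] at hx
      rw [Submodule.mem_bot] at hx
      rw [hx, map_zero, smul_zero]
    | succ n ih =>
      intro μ Z hZf hfd hZG hrk x hx
      haveI := hfd
      have hcoe : ∀ y ∈ Z, ((f - μ • 1) ^ (Module.finrank K Z)) y = 0 :=
        jc_nilres f μ Z hZf hZG
      set U : Submodule K V := Submodule.map (f - μ • (1 : V →ₗ[K] V)) Z with hUdef
      have hUZ : U ≤ Z := by
        rintro _ ⟨y, hy, rfl⟩
        have : (f - μ • (1 : V →ₗ[K] V)) y = f y - μ • y := by simp [LinearMap.sub_apply]
        rw [this]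
        exact sub_mem (hZf y hy) (Z.smul_mem μ hy)
      by_cases hU : U = Z
      · -- Z = ⊥
        have hmap : ∀ m : ℕ, Submodule.map ((f - μ • (1 : V →ₗ[K] V)) ^ m) Z = Z := by
          intro m
          induction m with
          | zero => rw [pow_zero, Module.End.one_eq_id, Submodule.map_id]
          | succ m ihm =>
            rw [pow_succ', Module.End.mul_eq_comp, Submodule.map_comp, ihm]
            exact hU
          -- careful with order
        have hbot : Z ≤ ⊥ := by
          intro y hy
          rw [← hmap (Module.finrank K Z)] at hy
          obtain ⟨z, hz, rfl⟩ := hy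
          rw [Submodule.mem_bot]
          exact hcoe z hz
        have hx0 : x = 0 := by simpa using hbot hx
        rw [hx0, map_zero, smul_zero]
      · have hUlt : U < Z := lt_of_le_of_ne hUZ hU
        haveI : FiniteDimensional K U := Submodule.finiteDimensional_of_le hUZ
        have hUrk : Module.finrank K U ≤ n := by
          have := Submodule.finrank_lt_finrank_of_lt hUlt
          omega
        have hUf : ∀ y ∈ U, f y ∈ U := by
          rintro _ ⟨y, hy, rfl⟩
          refine ⟨f y, hZf y hy, ?_⟩
          simp [LinearMap.sub_apply, map_sub, map_smul]
        have hUG : U ≤ G μ := by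
          rintro _ ⟨y, hy, rfl⟩
          have : (f - μ • (1 : V →ₗ[K] V)) y = f y - μ • y := by simp [LinearMap.sub_apply]
          rw [this]
          exact sub_mem (hGf μ y (hZG hy)) ((G μ).smul_mem μ (hZG hy))
        have ihU : ∀ y ∈ U, D' y = μ • y := ih μ U hUf inferInstance hUG hUrk
        obtain ⟨hD', hN', hdiag', hnil'⟩ := hprop' Z hZf hfd
        suffices hS : ∀ z : Z, D' (z : V) = μ • (z : V) by exact hS ⟨x, hx⟩
        intro z
        have hz : (z : Z) ∈ ⨆ ν, Module.End.eigenspace (D'.restrict hD') ν :=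
          hdiag' ▸ Submodule.mem_top
        refine Submodule.iSup_induction (fun ν => Module.End.eigenspace (D'.restrict hD') ν)
          (motive := fun w : Z => D' (w : V) = μ • (w : V)) hz ?_ (by simp)
          (fun a b ha hb => show D' ((a + b : Z) : V) = μ • ((a + b : Z) : V) by
            rw [Submodule.coe_add, map_add, ha, hb, smul_add])
        intro ν w hw
        have hweig : D' (w : V) = ν • (w : V) := by
          have h := Module.End.mem_eigenspace_iff.mp hw
          have := congrArg Subtype.val h
          rwa [LinearMap.restrict_apply] at this
        rcases eq_or_ne ν μ with hνμ | hνμ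
        · rw [hweig, hνμ]
        -- show w = 0
        have ha : (μ - ν) ≠ 0 := sub_ne_zero.mpr (Ne.symm hνμ)
        set b : K := (μ - ν)⁻¹ with hbdef
        have hba : b * (μ - ν) = 1 := inv_mul_cancel₀ ha
        obtain ⟨m, hm⟩ := hnil'
        have hm1 : (N'.restrict hN') ^ (m + 1) = 0 := by
          rw [pow_succ, hm, zero_mul]
        -- N' on U acts as f - μ
        have hN'U : ∀ y ∈ U, N' y = (f - μ • (1 : V →ₗ[K] V)) y := by
          intro y hy
          have h1 : N' y = f y - D' y := by
            rw [hsum']; simp [LinearMap.add_apply]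
          rw [h1, ihU y hy]
          simp [LinearMap.sub_apply]
        -- membership chain
        have hmemZ : ∀ j : ℕ, ((f - μ • 1) ^ j) (w : V) ∈ Z := by
          intro j
          induction j with
          | zero => exact w.2
          | succ j ihj =>
            rw [pow_succ', Module.End.mul_apply]
            have : (f - μ • (1 : V →ₗ[K] V)) (((f - μ • 1) ^ j) (w : V))
                = f (((f - μ • 1) ^ j) (w : V)) - μ • (((f - μ • 1) ^ j) (w : V)) := by
              simp [LinearMap.sub_apply]
            rw [this]
            exact sub_mem (hZf _ ihj) (Z.smul_mem μ ihj)
        have hmemU : ∀ j : ℕ, ((f - μ • 1) ^ (j + 1)) (w : V) ∈ U := by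
          intro j
          rw [pow_succ', Module.End.mul_apply]
          exact ⟨_, hmemZ j, rfl⟩
        -- the key formula
        have hform : ∀ s : ℕ, (b ^ s) • ((N' ^ s) (w : V)) =
            (∑ j ∈ Finset.range s, (b ^ (j + 1)) • (((f - μ • 1) ^ (j + 1)) (w : V)))
              + (w : V) := by
          intro s
          induction s with
          | zero => simp
          | succ s ihs =>
            have hNs : (N' ^ (s + 1)) (w : V) = N' ((N' ^ s) (w : V)) := by
              rw [pow_succ', Module.End.mul_apply]
            have hsm : (b ^ (s + 1)) • ((N' ^ (s + 1)) (w : V))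
                = b • N' ((b ^ s) • ((N' ^ s) (w : V))) := by
              rw [hNs, map_smul, smul_smul, pow_succ, mul_comm]
            rw [hsm, ihs, map_add, map_sum]
            have hNw : N' (w : V) = ((f - μ • 1) (w : V)) + (μ - ν) • (w : V) := by
              have h1 : N' (w : V) = f (w : V) - D' (w : V) := by
                rw [hsum']; simp [LinearMap.add_apply]
              rw [h1, hweig]
              simp only [LinearMap.sub_apply, LinearMap.smul_apply, Module.End.one_apply,
                sub_smul]
              abel
            have hterm : ∀ j ∈ Finset.range s,
                N' ((b ^ (j + 1)) • (((f - μ • 1) ^ (j + 1)) (w : V)))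
                = (b ^ (j + 1)) • (((f - μ • 1) ^ (j + 2)) (w : V)) := by
              intro j _
              rw [map_smul, hN'U _ (hmemU j)]
              congr 1
              rw [pow_succ', Module.End.mul_apply, pow_succ', Module.End.mul_apply,
                pow_succ', Module.End.mul_apply]
            rw [Finset.sum_congr rfl hterm, hNw]
            rw [smul_add, smul_add, Finset.smul_sum]
            have hre : ∑ j ∈ Finset.range s,
                b • ((b ^ (j + 1)) • (((f - μ • 1) ^ (j + 2)) (w : V)))
                = ∑ j ∈ Finset.range s,
                  (b ^ (j + 2)) • (((f - μ • 1) ^ (j + 2)) (w : V)) := by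
              refine Finset.sum_congr rfl fun j _ => ?_
              rw [smul_smul, ← pow_succ']
            rw [hre, smul_smul, hba, one_smul]
            have hsum2 : ∑ j ∈ Finset.range (s + 1),
                (b ^ (j + 1)) • (((f - μ • 1) ^ (j + 1)) (w : V))
                = (∑ j ∈ Finset.range s, (b ^ (j + 2)) • (((f - μ • 1) ^ (j + 2)) (w : V)))
                  + b • ((f - μ • 1) (w : V)) := by
              rw [Finset.sum_range_succ']
              simp [pow_succ]
            rw [hsum2]
            abel
        -- N'^(m+1) w = 0
        have hNm : (N' ^ (m + 1)) (w : V) = 0 := by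
          have h2 := congrArg (fun g : Module.End K ↥Z => (g w : V)) hm1
          simpa [jc_pow_res_coe N' Z hN' (m + 1) w] using h2
        have hkey : (w : V) =
            - ∑ j ∈ Finset.range (m + 1), (b ^ (j + 1)) • (((f - μ • 1) ^ (j + 1)) (w : V)) := by
          have h3 := hform (m + 1)
          rw [hNm, smul_zero] at h3
          exact eq_neg_of_add_eq_zero_right h3.symm
        set Bc : V →ₗ[K] V :=
          - ∑ j ∈ Finset.range (m + 1), (b ^ (j + 1)) • ((f - μ • 1) ^ j) with hBc
        have hcomm2 : Commute (f - μ • (1 : V →ₗ[K] V)) Bc := by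
          rw [hBc]
          apply Commute.neg_right
          refine Commute.sum_right _ _ _ fun j _ => ?_
          exact ((Commute.refl _).pow_right j).smul_right _
        have hBcapp : Bc (w : V) =
            - ∑ j ∈ Finset.range (m + 1), (b ^ (j + 1)) • (((f - μ • 1) ^ j) (w : V)) := by
          rw [hBc]
          simp [LinearMap.sum_apply]
        have hBw : ((f - μ • (1 : V →ₗ[K] V)) * Bc) (w : V) = (w : V) := by
          have hLHS : ((f - μ • (1 : V →ₗ[K] V)) * Bc) (w : V) =
              - ∑ j ∈ Finset.range (m + 1),
                (b ^ (j + 1)) • (((f - μ • 1) ^ (j + 1)) (w : V)) := by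
            rw [Module.End.mul_apply, hBcapp, map_neg, map_sum]
            congr 1
            refine Finset.sum_congr rfl fun j _ => ?_
            rw [map_smul]
            congr 1
            rw [pow_succ', Module.End.mul_apply]
          rw [hLHS]
          exact hkey.symm
        set B : V →ₗ[K] V := (f - μ • (1 : V →ₗ[K] V)) * Bc with hBdef
        have hBs : ∀ s : ℕ, (B ^ s) (w : V) = (w : V) := by
          intro s
          induction s with
          | zero => simp
          | succ s ihs2 =>
            rw [pow_succ, Module.End.mul_apply, hBw, ihs2]
        have hZstable : ∀ y ∈ Z, (f - μ • (1 : V →ₗ[K] V)) y ∈ Z := by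
          intro y hy
          have h5 : (f - μ • (1 : V →ₗ[K] V)) y = f y - μ • y := by simp [LinearMap.sub_apply]
          rw [h5]; exact sub_mem (hZf y hy) (Z.smul_mem μ hy)
        have hBcZ : ∀ y ∈ Z, Bc y ∈ Z := by
          intro y hy
          have hpow : ∀ j : ℕ, ((f - μ • (1 : V →ₗ[K] V)) ^ j) y ∈ Z := by
            intro j
            induction j with
            | zero => simpa using hy
            | succ j ihj => rw [pow_succ', Module.End.mul_apply]; exact hZstable _ ihj
          rw [hBc]
          simp only [LinearMap.neg_apply, LinearMap.sum_apply, LinearMap.smul_apply]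
          exact neg_mem (Submodule.sum_mem _ fun j _ => Z.smul_mem _ (hpow j))
        have hBck : ∀ s : ℕ, ∀ y ∈ Z, (Bc ^ s) y ∈ Z := by
          intro s
          induction s with
          | zero => intro y hy; simpa using hy
          | succ s ihs3 =>
            intro y hy
            rw [pow_succ, Module.End.mul_apply]
            exact ihs3 _ (hBcZ y hy)
        have hw0 : (w : V) = 0 := by
          have h1 := hBs (Module.finrank K ↥Z)
          rw [hBdef, hcomm2.mul_pow, Module.End.mul_apply] at h1
          rw [hcoe _ (hBck _ _ w.2)] at h1
          exact h1.symm
        rw [hw0, map_zero, smul_zero]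
  -- use the claim to conclude uniqueness
  have hD'eq : D' = D := by
    apply hExt
    intro μ x hx
    obtain ⟨W, hWfd, hWf, hxW⟩ := hloc x
    haveI := hWfd
    have hZf : ∀ y ∈ W ⊓ G μ, f y ∈ W ⊓ G μ := fun y hy =>
      Submodule.mem_inf.mpr ⟨hWf y (Submodule.mem_inf.mp hy).1,
        hGf μ y (Submodule.mem_inf.mp hy).2⟩
    haveI : FiniteDimensional K ↥(W ⊓ G μ) := Submodule.finiteDimensional_of_le inf_le_left
    have h6 := claim (Module.finrank K ↥(W ⊓ G μ)) μ (W ⊓ G μ) hZf inferInstance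
      inf_le_right le_rfl x (Submodule.mem_inf.mpr ⟨hxW, hx⟩)
    rw [h6, hDapply μ x hx]
  refine ⟨hD'eq, ?_⟩
  have h7 : D + N = D' + N' := by rw [← hfDN, ← hsum']
  rw [hD'eq] at h7
  exact (add_left_cancel h7).symm
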